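/- Let B be a finite bipartite graph with parts L and R. If there is no matching saturating L, then there exists a nonempty subset L' ⊆ L with |N(L')| < |L'| such that there exists a matching between L' and N(L') saturating N(L'). -/
import Mathlib


/-- The neighborhood in `R` (type `β`) of a set `L'` of vertices of `L` (type `α`)
in a bipartite graph given by the adjacency relation `Adj`. -/
def NB {α β : Type*} (Adj : α → β → Prop) (L' : Finset α) : Set β :=
  {r | ∃ a ∈ L', Adj a r}

/-- A matching of the bipartite graph saturating all of `L`. -/
def SaturatesL {α β : Type*} (Adj : α → β → Prop) (f : α → β) : Prop :=
  Function.Injective f ∧ ∀ a, Adj a (f a)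

/-- A matching between `N(L')` and `L'` saturating `N(L')`: an injective assignment of
distinct vertices of `L'` to the vertices of `N(L')`, respecting adjacency. -/
def SaturatesNB {α β : Type*} (Adj : α → β → Prop) (L' : Finset α) (g : β → α) : Prop :=
  Set.InjOn g (NB Adj L') ∧ ∀ r ∈ NB Adj L', g r ∈ L' ∧ Adj (g r) r

theorem exists_violating_set_with_matching {α β : Type*} [Fintype α] [Fintype β]
    (Adj : α → β → Prop)
    (hno : ¬ ∃ f : α → β, SaturatesL Adj f) :
    ∃ L' : Finset α, L'.Nonempty ∧ (NB Adj L').ncard < L'.card ∧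
      ∃ g : β → α, SaturatesNB Adj L' g := by
  classical
  set t : α → Finset β := fun a => Finset.univ.filter (fun b => Adj a b) with ht
  have hNBset : ∀ s : Finset α, NB Adj s = ↑(s.biUnion t) := by
    intro s
    ext r
    simp [NB, ht]
  have hNB : ∀ s : Finset α, (NB Adj s).ncard = (s.biUnion t).card := by
    intro s
    rw [hNBset s, Set.ncard_coe_finset]
  -- Hall fails for t
  have h1 : ¬ ∀ s : Finset α, s.card ≤ (s.biUnion t).card := by
    intro h
    obtain ⟨f, hf, hf2⟩ := (Finset.all_card_le_biUnion_card_iff_exists_injective t).mp h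
    exact hno ⟨f, hf, fun a => by simpa [ht] using hf2 a⟩
  push_neg at h1
  -- pick a minimal violating set
  set S : Finset (Finset α) :=
    Finset.univ.filter (fun s => (s.biUnion t).card < s.card) with hS
  have hSne : S.Nonempty := by
    obtain ⟨s, hs⟩ := h1
    exact ⟨s, by simp [hS, hs]⟩
  obtain ⟨L', hL'S, hmin⟩ := Finset.exists_min_image S Finset.card hSne
  have hviol : (L'.biUnion t).card < L'.card := by
    simpa [hS] using hL'S
  have hLne : L'.Nonempty := by
    rw [Finset.nonempty_iff_ne_empty]
    rintro rfl
    simp at hviol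
  obtain ⟨l₀, hl₀⟩ := hLne
  refine ⟨L', ⟨l₀, hl₀⟩, by rw [hNB]; exact hviol, ?_⟩
  -- reverse Hall on the neighborhood
  set t' : {r : β // r ∈ L'.biUnion t} → Finset α :=
    fun r => L'.filter (fun a => Adj a r.1) with ht'
  have hall2 : ∀ s : Finset {r : β // r ∈ L'.biUnion t},
      s.card ≤ (s.biUnion t').card := by
    intro s
    by_contra hs
    push_neg at hs
    set G : Finset α := s.biUnion t' with hG
    have hGsub : G ⊆ L' := by
      intro a ha
      simp only [hG, Finset.mem_biUnion, ht', Finset.mem_filter] at ha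
      obtain ⟨r, _, ha1, _⟩ := ha
      exact ha1
    have hsne : s.Nonempty := by
      rw [Finset.nonempty_iff_ne_empty]
      rintro rfl
      simp at hs
    have hGne : G.Nonempty := by
      obtain ⟨r, hr⟩ := hsne
      have := r.2
      rw [Finset.mem_biUnion] at this
      obtain ⟨a, ha, har⟩ := this
      refine ⟨a, ?_⟩
      simp only [hG, Finset.mem_biUnion]
      exact ⟨r, hr, by simp [ht', ha, (by simpa [ht] using har : Adj a r.1)]⟩
    set L'' : Finset α := L' \ G with hL''
    set sim : Finset β := s.image Subtype.val with hsim
    have hsimcard : sim.card = s.card := Finset.card_image_of_injective _ Subtype.val_injective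
    have hsimsub : sim ⊆ L'.biUnion t := by
      intro r hr
      simp only [hsim, Finset.mem_image] at hr
      obtain ⟨r', _, rfl⟩ := hr
      exact r'.2
    have hsub2 : L''.biUnion t ⊆ (L'.biUnion t) \ sim := by
      intro r hr
      rw [Finset.mem_biUnion] at hr
      obtain ⟨a, ha, har⟩ := hr
      rw [hL'', Finset.mem_sdiff] at ha
      obtain ⟨haL, haG⟩ := ha
      rw [Finset.mem_sdiff]
      constructor
      · exact Finset.mem_biUnion.mpr ⟨a, haL, har⟩
      · intro hrsim
        simp only [hsim, Finset.mem_image] at hrsim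
        obtain ⟨r', hr's, hr'val⟩ := hrsim
        apply haG
        simp only [hG, Finset.mem_biUnion]
        refine ⟨r', hr's, ?_⟩
        simp [ht', haL, hr'val, (by simpa [ht] using har : Adj a r)]
    have hc1 : (L''.biUnion t).card ≤ ((L'.biUnion t) \ sim).card :=
      Finset.card_le_card hsub2
    have hc2 : ((L'.biUnion t) \ sim).card = (L'.biUnion t).card - sim.card :=
      Finset.card_sdiff_of_subset hsimsub
    have hc3 : L''.card = L'.card - G.card := Finset.card_sdiff_of_subset hGsub
    have hc4 : sim.card ≤ (L'.biUnion t).card := Finset.card_le_card hsimsub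
    have hc5 : G.card ≤ L'.card := Finset.card_le_card hGsub
    have hc6 : 1 ≤ G.card := Finset.card_pos.mpr hGne
    have hGs : G.card < s.card := hs
    -- L'' is a smaller violating set
    have hviol'' : (L''.biUnion t).card < L''.card := by omega
    have hL''card : L''.card < L'.card := by omega
    have : L'' ∈ S := by simp [hS, hviol'']
    exact absurd (hmin L'' this) (by omega)
  obtain ⟨f, hfinj, hf⟩ :=
    (Finset.all_card_le_biUnion_card_iff_exists_injective t').mp hall2
  refine ⟨fun r => if h : r ∈ L'.biUnion t then f ⟨r, h⟩ else l₀, ?_, ?_⟩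
  · intro r1 hr1 r2 hr2 heq
    rw [hNBset, Finset.mem_coe] at hr1 hr2
    simp only [dif_pos hr1, dif_pos hr2] at heq
    have := hfinj heq
    exact congrArg Subtype.val this
  · intro r hr
    rw [hNBset, Finset.mem_coe] at hr
    simp only [dif_pos hr]
    have := hf ⟨r, hr⟩
    simp only [ht', Finset.mem_filter] at this
    exact this
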